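/- Let (W_m)_{m≥0} be 3×3 matrices of complex polynomials with deg W_m = m and invertible leading coefficient, and set ℬ_n = (W_{2n}; W_{2n+1}) (6×3 matrix polynomials). Suppose there exist 6×6 complex matrices A_n, B_n, C_n with C_n invertible for all n ≥ 1, such that (with ℬ_{-1} = 0) x·ℬ_n = A_n·ℬ_{n+1} + B_n·ℬ_n + C_n·ℬ_{n-1} for all n ≥ 0. Then there exist moment sequences μ^1, μ^2 : ℕ → M_3(ℂ) such that, with M^1, M^2 the associated matrix moment functionals and 𝔐(x^k ℬ_n) the 6×6 matrix with 3×3 blocks [[M^1(x^k W_{2n}), M^2(x^k W_{2n})], [M^1(x^k W_{2n+1}), M^2(x^k W_{2n+1})]], one has: 𝔐(x^k ℬ_n) = 0 for all 0 ≤ k < n, 𝔐(ℬ_0) is invertible, and 𝔐(x^n ℬ_n) = C_n·C_{n-1}·⋯·C_1·𝔐(ℬ_0) is invertible for every n ≥ 1. -/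

import Mathlib

open Polynomial

set_option linter.unusedSectionVars false

section MomAux

variable {m' m'' : Type*} [Fintype m'] [Fintype m'']

/-- generalized matrix moment functional, arbitrary row type -/
noncomputable def mmG (μ : ℕ → Matrix (Fin 3) (Fin 3) ℂ)
    (V : Matrix m' (Fin 3) (Polynomial ℂ)) : Matrix m' (Fin 3) ℂ :=
  ∑ᶠ k : ℕ, (Matrix.of fun i j => (V i j).coeff k) * μ k

lemma mmG_eq_sum (μ : ℕ → Matrix (Fin 3) (Fin 3) ℂ) (V : Matrix m' (Fin 3) ℂ[X]) (N : ℕ)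
    (h : ∀ i j k, N ≤ k → (V i j).coeff k = 0) :
    mmG μ V = ∑ k ∈ Finset.range N, (Matrix.of fun i j => (V i j).coeff k) * μ k := by
  apply finsum_eq_sum_of_support_subset
  intro k hk
  simp only [Function.mem_support] at hk
  by_contra hknot
  apply hk
  have : (Matrix.of fun i j => (V i j).coeff k) = (0 : Matrix m' (Fin 3) ℂ) := by
    ext i j
    exact h i j k (by simpa using hknot)
  rw [this, Matrix.zero_mul]

/-- a degree bound -/
noncomputable def bnd (V : Matrix m' (Fin 3) ℂ[X]) : ℕ :=
  (Finset.univ.sup fun p : m' × Fin 3 => (V p.1 p.2).natDegree) + 1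

lemma bnd_spec (V : Matrix m' (Fin 3) ℂ[X]) :
    ∀ i j k, bnd V ≤ k → (V i j).coeff k = 0 := by
  intro i j k hk
  apply coeff_eq_zero_of_natDegree_lt
  calc (V i j).natDegree ≤ Finset.univ.sup fun p : m' × Fin 3 => (V p.1 p.2).natDegree :=
        Finset.le_sup (f := fun p : m' × Fin 3 => (V p.1 p.2).natDegree) (Finset.mem_univ (i, j))
    _ < bnd V := Nat.lt_succ_self _
    _ ≤ k := hk

lemma mmG_zero (μ : ℕ → Matrix (Fin 3) (Fin 3) ℂ) :
    mmG μ (0 : Matrix m' (Fin 3) ℂ[X]) = 0 := by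
  rw [mmG_eq_sum μ 0 0 (by intro i j k _; simp)]
  simp

lemma mmG_add (μ : ℕ → Matrix (Fin 3) (Fin 3) ℂ) (V V' : Matrix m' (Fin 3) ℂ[X]) :
    mmG μ (V + V') = mmG μ V + mmG μ V' := by
  set N := max (bnd V) (bnd V') with hN
  rw [mmG_eq_sum μ V N (fun i j k hk => bnd_spec V i j k (le_trans (le_max_left _ _) hk)),
    mmG_eq_sum μ V' N (fun i j k hk => bnd_spec V' i j k (le_trans (le_max_right _ _) hk)),
    mmG_eq_sum μ (V + V') N ?_]
  · rw [← Finset.sum_add_distrib]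
    apply Finset.sum_congr rfl
    intro k _
    have : (Matrix.of fun i j => ((V + V') i j).coeff k)
        = (Matrix.of fun i j => (V i j).coeff k) + (Matrix.of fun i j => (V' i j).coeff k) := by
      ext i j; simp [coeff_add]
    rw [this, Matrix.add_mul]
  · intro i j k hk
    simp only [Matrix.add_apply, coeff_add,
      bnd_spec V i j k (le_trans (le_max_left _ _) hk),
      bnd_spec V' i j k (le_trans (le_max_right _ _) hk), add_zero]

lemma mmG_constMul (μ : ℕ → Matrix (Fin 3) (Fin 3) ℂ) (P : Matrix m'' m' ℂ)
    (V : Matrix m' (Fin 3) ℂ[X]) :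
    mmG μ (P.map C * V) = P * mmG μ V := by
  have hco : ∀ i j k, ((P.map C * V) i j).coeff k = ∑ l, P i l * (V l j).coeff k := by
    intro i j k
    simp [Matrix.mul_apply, finset_sum_coeff, coeff_C_mul]
  rw [mmG_eq_sum μ V (bnd V) (bnd_spec V),
    mmG_eq_sum μ (P.map C * V) (bnd V) ?_]
  · rw [Matrix.mul_sum]
    apply Finset.sum_congr rfl
    intro k _
    have : (Matrix.of fun i j => ((P.map C * V) i j).coeff k)
        = P * Matrix.of fun i j => (V i j).coeff k := by
      ext i j
      simp [hco, Matrix.mul_apply]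
    rw [this, Matrix.mul_assoc]
  · intro i j k hk
    rw [hco]
    apply Finset.sum_eq_zero
    intro l _
    rw [bnd_spec V l j k hk, mul_zero]

lemma mmG_submatrix (μ : ℕ → Matrix (Fin 3) (Fin 3) ℂ) (e : m'' → m')
    (V : Matrix m' (Fin 3) ℂ[X]) :
    mmG μ (V.submatrix e id) = (mmG μ V).submatrix e id := by
  rw [mmG_eq_sum μ V (bnd V) (bnd_spec V),
    mmG_eq_sum μ (V.submatrix e id) (bnd V)
      (fun i j k hk => bnd_spec V (e i) j k hk)]
  ext i j
  rw [Matrix.submatrix_apply, Matrix.sum_apply, Matrix.sum_apply]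
  apply Finset.sum_congr rfl
  intro k _
  simp [Matrix.mul_apply]

end MomAux

/-- recursively constructed moment sequence dual to the basis `W`, with targets `T` -/
noncomputable def dualSeq (W : ℕ → Matrix (Fin 3) (Fin 3) ℂ[X])
    (T : ℕ → Matrix (Fin 3) (Fin 3) ℂ) : ℕ → Matrix (Fin 3) (Fin 3) ℂ
  | k =>
    Ring.inverse (Matrix.of fun i j => (W k i j).coeff k) *
      (T k - ∑ m ∈ (Finset.range k).attach,
        (Matrix.of fun i j => (W k i j).coeff m.1) * dualSeq W T m.1)
  decreasing_by exact Finset.mem_range.mp m.2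

lemma mmG_dualSeq (W : ℕ → Matrix (Fin 3) (Fin 3) ℂ[X]) (T : ℕ → Matrix (Fin 3) (Fin 3) ℂ)
    (hdeg : ∀ m : ℕ, ∀ i j : Fin 3, (W m i j).natDegree ≤ m)
    (hlead : ∀ m : ℕ, IsUnit (Matrix.of fun i j : Fin 3 => (W m i j).coeff m)) (k : ℕ) :
    mmG (dualSeq W T) (W k) = T k := by
  rw [mmG_eq_sum _ (W k) (k + 1)
    (fun i j k' hk' => coeff_eq_zero_of_natDegree_lt (lt_of_le_of_lt (hdeg k i j) hk'))]
  rw [Finset.sum_range_succ]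
  have hk : dualSeq W T k =
      Ring.inverse (Matrix.of fun i j => (W k i j).coeff k) *
        (T k - ∑ m ∈ (Finset.range k).attach,
          (Matrix.of fun i j => (W k i j).coeff m.1) * dualSeq W T m.1) := by
    rw [dualSeq]
  rw [hk, ← Matrix.mul_assoc, Ring.mul_inverse_cancel _ (hlead k), Matrix.one_mul,
    Finset.sum_attach (Finset.range k)
      (fun m => (Matrix.of fun i j => (W k i j).coeff m) * dualSeq W T m)]
  abel

/-- The matrix moment functional associated with a sequence `μ : ℕ → M₃(ℂ)` of
moments: it sends the 3×3 matrix polynomial `W(x) = ∑ₖ Wₖ xᵏ` to `∑ₖ Wₖ · μ k`. -/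
noncomputable def matMom (μ : ℕ → Matrix (Fin 3) (Fin 3) ℂ)
    (W : Matrix (Fin 3) (Fin 3) (Polynomial ℂ)) : Matrix (Fin 3) (Fin 3) ℂ :=
  ∑ᶠ k : ℕ, (Matrix.of fun i j => (W i j).coeff k) * μ k

/-- The 6×3 matrix polynomial `ℬ n` obtained by stacking `W (2n)` on top of
`W (2n+1)`. -/
def stack (W : ℕ → Matrix (Fin 3) (Fin 3) (Polynomial ℂ)) (n : ℕ) :
    Matrix (Fin 3 ⊕ Fin 3) (Fin 3) (Polynomial ℂ) :=
  Matrix.of (Sum.elim (W (2 * n)) (W (2 * n + 1)))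

/-- The 6×6 matrix `𝔐(x^k ℬ n)` with 3×3 blocks
`[[M¹(x^k W (2n)), M²(x^k W (2n))], [M¹(x^k W (2n+1)), M²(x^k W (2n+1))]]`. -/
noncomputable def bigM (μ1 μ2 : ℕ → Matrix (Fin 3) (Fin 3) ℂ)
    (W : ℕ → Matrix (Fin 3) (Fin 3) (Polynomial ℂ)) (k n : ℕ) :
    Matrix (Fin 3 ⊕ Fin 3) (Fin 3 ⊕ Fin 3) ℂ :=
  Matrix.fromBlocks
    (matMom μ1 ((X : ℂ[X]) ^ k • W (2 * n))) (matMom μ2 ((X : ℂ[X]) ^ k • W (2 * n)))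
    (matMom μ1 ((X : ℂ[X]) ^ k • W (2 * n + 1))) (matMom μ2 ((X : ℂ[X]) ^ k • W (2 * n + 1)))

lemma matMom_eq_mmG (μ : ℕ → Matrix (Fin 3) (Fin 3) ℂ)
    (V : Matrix (Fin 3) (Fin 3) ℂ[X]) : matMom μ V = mmG μ V := rfl

/-- the combined 6×6 moment matrix of a 6×3 matrix polynomial -/
noncomputable def Mom2 (μ1 μ2 : ℕ → Matrix (Fin 3) (Fin 3) ℂ)
    (V : Matrix (Fin 3 ⊕ Fin 3) (Fin 3) ℂ[X]) :
    Matrix (Fin 3 ⊕ Fin 3) (Fin 3 ⊕ Fin 3) ℂ :=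
  Matrix.of fun i j => Sum.elim (mmG μ1 V i) (mmG μ2 V i) j

lemma Mom2_add (μ1 μ2 : ℕ → Matrix (Fin 3) (Fin 3) ℂ)
    (V V' : Matrix (Fin 3 ⊕ Fin 3) (Fin 3) ℂ[X]) :
    Mom2 μ1 μ2 (V + V') = Mom2 μ1 μ2 V + Mom2 μ1 μ2 V' := by
  ext i j
  cases j <;> simp [Mom2, mmG_add]

lemma Mom2_zero (μ1 μ2 : ℕ → Matrix (Fin 3) (Fin 3) ℂ) :
    Mom2 μ1 μ2 (0 : Matrix (Fin 3 ⊕ Fin 3) (Fin 3) ℂ[X]) = 0 := by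
  ext i j
  cases j <;> simp [Mom2, mmG_zero]

lemma Mom2_constMul (μ1 μ2 : ℕ → Matrix (Fin 3) (Fin 3) ℂ)
    (P : Matrix (Fin 3 ⊕ Fin 3) (Fin 3 ⊕ Fin 3) ℂ)
    (V : Matrix (Fin 3 ⊕ Fin 3) (Fin 3) ℂ[X]) :
    Mom2 μ1 μ2 (P.map C * V) = P * Mom2 μ1 μ2 V := by
  ext i j
  cases j <;> simp [Mom2, mmG_constMul, Matrix.mul_apply]

lemma bigM_eq_Mom2 (μ1 μ2 : ℕ → Matrix (Fin 3) (Fin 3) ℂ)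
    (W : ℕ → Matrix (Fin 3) (Fin 3) ℂ[X]) (k n : ℕ) :
    bigM μ1 μ2 W k n = Mom2 μ1 μ2 ((X : ℂ[X]) ^ k • stack W n) := by
  have h1 : ((X : ℂ[X]) ^ k • W (2 * n))
      = ((X : ℂ[X]) ^ k • stack W n).submatrix Sum.inl id := by
    ext i j; simp [stack, Matrix.submatrix_apply]; rfl
  have h2 : ((X : ℂ[X]) ^ k • W (2 * n + 1))
      = ((X : ℂ[X]) ^ k • stack W n).submatrix Sum.inr id := by
    ext i j; simp [stack, Matrix.submatrix_apply]; rfl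
  ext i j
  cases i <;> cases j <;>
    simp [bigM, Mom2, matMom_eq_mmG, h1, h2, mmG_submatrix]

/-- Implication (b) ⇒ (a) of the Favard-type Theorem 5.2 of the
paper: if the 3×3 matrix polynomials `W m` (degree `m`, invertible leading
coefficient) are such that the stacked `ℬ n` satisfy a block three-term recurrence
`x·ℬ n = A n·ℬ (n+1) + B n·ℬ n + C n·ℬ (n-1)` (with `ℬ (-1) = 0`) where each `C n`
(`n ≥ 1`) is invertible, then there are moment sequences `μ1, μ2` such that
`𝔐(x^k ℬ n) = 0` for `k < n`, `𝔐(ℬ 0)` is invertible, and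
`𝔐(x^n ℬ n) = C n · C (n-1) ⋯ C 1 · 𝔐(ℬ 0)` is invertible for every `n ≥ 1`. -/
theorem stmt_19 (W : ℕ → Matrix (Fin 3) (Fin 3) (Polynomial ℂ))
    (hdeg : ∀ m : ℕ, ∀ i j : Fin 3, (W m i j).natDegree ≤ m)
    (hlead : ∀ m : ℕ, IsUnit (Matrix.of fun i j : Fin 3 => (W m i j).coeff m))
    (A B Cc : ℕ → Matrix (Fin 3 ⊕ Fin 3) (Fin 3 ⊕ Fin 3) ℂ)
    (hCc : ∀ n : ℕ, 1 ≤ n → IsUnit (Cc n))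
    (hrec : ∀ n : ℕ, (X : ℂ[X]) • stack W n =
      (A n).map C * stack W (n + 1) + (B n).map C * stack W n +
      (Cc n).map C * (if 1 ≤ n then stack W (n - 1) else 0)) :
    ∃ μ1 μ2 : ℕ → Matrix (Fin 3) (Fin 3) ℂ,
      (∀ n k : ℕ, k < n → bigM μ1 μ2 W k n = 0) ∧
      IsUnit (bigM μ1 μ2 W 0 0) ∧
      ∀ n : ℕ, 1 ≤ n →
        bigM μ1 μ2 W n n =
          (((List.range n).map fun k => Cc (n - k)).prod) * bigM μ1 μ2 W 0 0 ∧
        IsUnit (bigM μ1 μ2 W n n) := by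
  obtain ⟨μ1, hμ1⟩ : ∃ μ, ∀ k, mmG μ (W k) =
      (if k = 0 then (1 : Matrix (Fin 3) (Fin 3) ℂ) else 0) :=
    ⟨dualSeq W _, mmG_dualSeq W _ hdeg hlead⟩
  obtain ⟨μ2, hμ2⟩ : ∃ μ, ∀ k, mmG μ (W k) =
      (if k = 1 then (1 : Matrix (Fin 3) (Fin 3) ℂ) else 0) :=
    ⟨dualSeq W _, mmG_dualSeq W _ hdeg hlead⟩
  -- restriction of `mmG` of a stacked matrix
  have hsubl : ∀ n, (stack W n).submatrix Sum.inl id = W (2 * n) := by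
    intro n; ext i j; simp [stack]; rfl
  have hsubr : ∀ n, (stack W n).submatrix Sum.inr id = W (2 * n + 1) := by
    intro n; ext i j; simp [stack]; rfl
  -- the base case: 𝔐(ℬ n) in block form
  have hbase' : ∀ n, bigM μ1 μ2 W 0 n =
      Matrix.fromBlocks
        (if 2 * n = 0 then 1 else 0) (if 2 * n = 1 then 1 else 0)
        (if 2 * n + 1 = 0 then 1 else 0) (if 2 * n + 1 = 1 then 1 else 0) := by
    intro n
    rw [bigM_eq_Mom2, pow_zero, one_smul]
    ext i j
    cases i <;> cases j <;>
      simp only [Mom2, Matrix.of_apply, Sum.elim_inl, Sum.elim_inr,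
        Matrix.fromBlocks_apply₁₁, Matrix.fromBlocks_apply₁₂,
        Matrix.fromBlocks_apply₂₁, Matrix.fromBlocks_apply₂₂]
    · rw [← hμ1 (2 * n), ← hsubl n, mmG_submatrix]; rfl
    · rw [← hμ2 (2 * n), ← hsubl n, mmG_submatrix]; rfl
    · rw [← hμ1 (2 * n + 1), ← hsubr n, mmG_submatrix]; rfl
    · rw [← hμ2 (2 * n + 1), ← hsubr n, mmG_submatrix]; rfl
  have hbase : ∀ n, bigM μ1 μ2 W 0 n = if n = 0 then 1 else 0 := by
    intro n
    rw [hbase']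
    rcases n with _ | n
    · norm_num [Matrix.fromBlocks_one]
    · have h1 : 2 * (n + 1) ≠ 0 := by omega
      have h2 : 2 * (n + 1) ≠ 1 := by omega
      have h3 : 2 * (n + 1) + 1 ≠ 1 := by omega
      rw [if_neg h1, if_neg h2, if_neg (by omega : ¬(2 * (n + 1) + 1 = 0)), if_neg h3,
        if_neg (Nat.succ_ne_zero n)]
      ext i j
      cases i <;> cases j <;> simp
  -- the recurrence at the level of moment matrices
  have hstep : ∀ k n, bigM μ1 μ2 W (k + 1) n =
      A n * bigM μ1 μ2 W k (n + 1) + B n * bigM μ1 μ2 W k n +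
        Cc n * (if 1 ≤ n then bigM μ1 μ2 W k (n - 1) else 0) := by
    intro k n
    have hx : (X : ℂ[X]) ^ (k + 1) • stack W n
        = (A n).map C * ((X : ℂ[X]) ^ k • stack W (n + 1)) +
          (B n).map C * ((X : ℂ[X]) ^ k • stack W n) +
          (Cc n).map C * (if 1 ≤ n then (X : ℂ[X]) ^ k • stack W (n - 1) else 0) := by
      rw [pow_succ, mul_smul, hrec n, smul_add, smul_add,
        Matrix.mul_smul, Matrix.mul_smul]
      congr 1
      split_ifs with h
      · rw [Matrix.mul_smul]
      · simp
    rw [bigM_eq_Mom2, hx, Mom2_add, Mom2_add, Mom2_constMul, Mom2_constMul,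
      ← bigM_eq_Mom2 μ1 μ2 W k (n + 1), ← bigM_eq_Mom2 μ1 μ2 W k n]
    by_cases h : 1 ≤ n
    · rw [if_pos h, if_pos h, Mom2_constMul, ← bigM_eq_Mom2 μ1 μ2 W k (n - 1)]
    · rw [if_neg h, if_neg h, Matrix.mul_zero, Mom2_zero, Matrix.mul_zero]
  -- vanishing below the diagonal
  have hvan : ∀ k n, k < n → bigM μ1 μ2 W k n = 0 := by
    intro k
    induction k with
    | zero => intro n hn; rw [hbase n, if_neg (by omega)]
    | succ k ih =>
      intro n hn
      rw [hstep k n, ih (n + 1) (by omega), ih n (by omega), if_pos (by omega),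
        ih (n - 1) (by omega)]
      simp
  -- the diagonal values
  have hdiag : ∀ n, bigM μ1 μ2 W n n = ((List.range n).map fun j => Cc (n - j)).prod := by
    intro n
    induction n with
    | zero => rw [hbase 0, if_pos rfl]; simp
    | succ n ih =>
      have hlist : ((List.range (n + 1)).map fun j => Cc (n + 1 - j)).prod
          = Cc (n + 1) * ((List.range n).map fun j => Cc (n - j)).prod := by
        rw [List.range_succ_eq_map, List.map_cons, List.prod_cons, List.map_map]
        have hcomp : ((fun j => Cc (n + 1 - j)) ∘ Nat.succ) = fun j => Cc (n - j) := by
          funext j; simp only [Function.comp_apply, Nat.succ_sub_succ]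
        rw [hcomp]
        norm_num
      rw [hstep n (n + 1), hvan n (n + 2) (by omega), hvan n (n + 1) (by omega),
        if_pos (by omega), Nat.add_sub_cancel, ih, hlist]
      simp
  have hunit : ∀ n, IsUnit (((List.range n).map fun j => Cc (n - j)).prod) := by
    intro n
    apply List.prod_isUnit
    intro x hx
    simp only [List.mem_map, List.mem_range] at hx
    obtain ⟨j, hj, rfl⟩ := hx
    exact hCc (n - j) (by omega)
  refine ⟨μ1, μ2, fun n k hk => hvan k n hk, ?_, ?_⟩
  · rw [hbase 0, if_pos rfl]; exact isUnit_one
  · intro n hn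
    constructor
    · rw [hdiag n, hbase 0, if_pos rfl, Matrix.mul_one]
    · rw [hdiag n]; exact hunit n
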